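/- Let n ≥ 1 be an integer. Then (2n+1)·Σ_{k=1}^{n-1} ((−1)^{k+1}/(2k+1))·C(n,k) + Σ_{k=1}^{n} ((−1)^{k−1}/(2k−1))·C(n,k) = 2n + (−1)^n, and consequently (1/(4n(n+1)))·[ (2n + Σ_{k=1}^{n} ((−1)^{k+1}/(2k+1))·C(n,k)) + (2n+1)·Σ_{k=1}^{n} ((−1)^{k−1}/(2k−1))·C(n,k) ] = 1 − Σ_{k=1}^{n} ((−1)^{k+1}/(2k+1))·C(n,k). -/

import Mathlib

open Finset

noncomputable def Ufun (n : ℕ) : ℝ :=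
  ∑ k ∈ Finset.range (n + 1), (-1 : ℝ) ^ k / (2 * (k : ℝ) + 1) * (n.choose k : ℝ)

noncomputable def Tfun (n : ℕ) : ℝ :=
  ∑ k ∈ Finset.Icc 1 n, (-1 : ℝ) ^ (k - 1) / (2 * (k : ℝ) - 1) * (n.choose k : ℝ)

noncomputable def Sfun (n : ℕ) : ℝ :=
  ∑ k ∈ Finset.Icc 1 n, (-1 : ℝ) ^ (k + 1) / (2 * (k : ℝ) + 1) * (n.choose k : ℝ)

lemma S_eq (n : ℕ) : Sfun n = 1 - Ufun n := by
  have h : Finset.range (n+1) = insert 0 (Finset.Icc 1 n) := by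
    ext k
    simp [Nat.lt_succ_iff, Nat.one_le_iff_ne_zero]
    omega
  rw [Ufun, h, Finset.sum_insert (by simp)]
  have h2 : ∑ k ∈ Finset.Icc 1 n, (-1:ℝ)^k/(2*(k:ℝ)+1)*(n.choose k : ℝ)
      = -Sfun n := by
    rw [Sfun, ← Finset.sum_neg_distrib]
    apply Finset.sum_congr rfl
    intro k _
    rw [pow_succ]; ring
  rw [h2]
  norm_num

lemma Urec (n : ℕ) : (2 * ((n:ℝ)+1) + 1) * Ufun (n+1) = 2 * ((n:ℝ)+1) * Ufun n := by
  have key : ∀ k ∈ Finset.range (n+2),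
      (2 * ((n:ℝ)+1) + 1) * ((-1 : ℝ) ^ k / (2 * (k : ℝ) + 1) * ((n+1).choose k : ℝ))
      = (-1:ℝ)^k * ((n+1).choose k : ℝ)
        + 2 * ((n:ℝ)+1) * ((-1 : ℝ) ^ k / (2 * (k : ℝ) + 1) * (n.choose k : ℝ)) := by
    intro k hk
    simp only [Finset.mem_range, Nat.lt_succ_iff] at hk
    have hc : ((n:ℝ)+1) * (n.choose k : ℝ) = ((n+1).choose k : ℝ) * ((n:ℝ) + 1 - k) := by
      have := Nat.choose_mul_succ_eq n k
      have hcast : ((n.choose k * (n+1) : ℕ) : ℝ) = (((n+1).choose k * (n+1-k) : ℕ) : ℝ) := by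
        exact_mod_cast congrArg (Nat.cast : ℕ → ℝ) this
      push_cast [Nat.cast_sub hk] at hcast
      linarith
    have hpos : (2 * (k : ℝ) + 1) ≠ 0 := by positivity
    field_simp
    linear_combination (-2) * hc
  have hsum : (2 * ((n:ℝ)+1) + 1) * Ufun (n+1)
      = ∑ k ∈ Finset.range (n+2), ((-1:ℝ)^k * ((n+1).choose k : ℝ)
        + 2 * ((n:ℝ)+1) * ((-1 : ℝ) ^ k / (2 * (k : ℝ) + 1) * (n.choose k : ℝ))) := by
    rw [Ufun, Finset.mul_sum]
    exact Finset.sum_congr rfl key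
  rw [hsum, Finset.sum_add_distrib]
  have h0 : (∑ i ∈ Finset.range (n+2), (-1:ℤ)^i * ((n+1).choose i : ℤ)) = 0 := by
    have := Int.alternating_sum_range_choose (n := n+1)
    simpa using this
  have h1 : ∑ k ∈ Finset.range (n+2), (-1:ℝ)^k * ((n+1).choose k : ℝ) = 0 := by
    have := congrArg (Int.cast : ℤ → ℝ) h0
    push_cast at this
    exact this
  have h2 : ∑ k ∈ Finset.range (n+2), (-1 : ℝ) ^ k / (2 * (k : ℝ) + 1) * (n.choose k : ℝ)
      = Ufun n := by
    rw [Ufun, Finset.sum_range_succ]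
    simp [Nat.choose_succ_self]
  rw [h1, ← Finset.mul_sum, h2, zero_add]

lemma Trec (n : ℕ) : Tfun (n+1) = Tfun n + Ufun n := by
  have hsplit : ∀ k ∈ Finset.Icc 1 (n+1),
      (-1 : ℝ) ^ (k - 1) / (2 * (k : ℝ) - 1) * (((n+1).choose k : ℕ) : ℝ)
      = (-1 : ℝ) ^ (k - 1) / (2 * (k : ℝ) - 1) * (n.choose k : ℝ)
        + (-1 : ℝ) ^ (k - 1) / (2 * (k : ℝ) - 1) * (n.choose (k-1) : ℝ) := by
    intro k hk
    simp only [Finset.mem_Icc] at hk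
    obtain ⟨j, rfl⟩ : ∃ j, k = j + 1 := ⟨k - 1, by omega⟩
    rw [Nat.choose_succ_succ]
    push_cast
    ring
  rw [Tfun, Finset.sum_congr rfl hsplit, Finset.sum_add_distrib]
  congr 1
  · rw [Tfun]
    rw [show Finset.Icc 1 (n+1) = insert (n+1) (Finset.Icc 1 n) by
      ext k; simp [Finset.mem_insert]; omega]
    rw [Finset.sum_insert (by simp)]
    simp [Nat.choose_succ_self]
  · rw [Ufun]
    rw [show Finset.Icc 1 (n+1) = Finset.map ⟨Nat.succ, Nat.succ_injective⟩ (Finset.range (n+1)) by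
      ext k
      simp only [Finset.mem_Icc, Finset.mem_map, Finset.mem_range, Function.Embedding.coeFn_mk]
      constructor
      · rintro ⟨h1, h2⟩; exact ⟨k-1, by omega, by omega⟩
      · rintro ⟨j, hj, rfl⟩; omega]
    rw [Finset.sum_map]
    apply Finset.sum_congr rfl
    intro j hj
    simp only [Function.Embedding.coeFn_mk, Nat.succ_eq_add_one, Nat.add_sub_cancel]
    push_cast
    ring_nf

lemma TU (n : ℕ) : Tfun n = (2 * (n:ℝ) + 1) * Ufun n - 1 := by
  induction n with
  | zero => simp [Tfun, Ufun]
  | succ m ih =>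
    rw [Trec, ih]
    have := Urec m
    push_cast
    linarith

theorem stmt0 (n : ℕ) (hn : 1 ≤ n) :
    (2 * (n : ℝ) + 1) *
        (∑ k ∈ Finset.Icc 1 (n - 1), (-1 : ℝ) ^ (k + 1) / (2 * (k : ℝ) + 1) * (n.choose k : ℝ)) +
      (∑ k ∈ Finset.Icc 1 n, (-1 : ℝ) ^ (k - 1) / (2 * (k : ℝ) - 1) * (n.choose k : ℝ)) =
      2 * (n : ℝ) + (-1 : ℝ) ^ n ∧
    (1 / (4 * (n : ℝ) * ((n : ℝ) + 1))) *
        ((2 * (n : ℝ) +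
            ∑ k ∈ Finset.Icc 1 n, (-1 : ℝ) ^ (k + 1) / (2 * (k : ℝ) + 1) * (n.choose k : ℝ)) +
          (2 * (n : ℝ) + 1) *
            ∑ k ∈ Finset.Icc 1 n, (-1 : ℝ) ^ (k - 1) / (2 * (k : ℝ) - 1) * (n.choose k : ℝ)) =
      1 - ∑ k ∈ Finset.Icc 1 n, (-1 : ℝ) ^ (k + 1) / (2 * (k : ℝ) + 1) * (n.choose k : ℝ) := by
  obtain ⟨m, rfl⟩ : ∃ m, n = m + 1 := ⟨n - 1, by omega⟩
  have hU := S_eq (m + 1)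
  have hT := TU (m + 1)
  have hS : (∑ k ∈ Finset.Icc 1 (m+1), (-1 : ℝ) ^ (k + 1) / (2 * (k : ℝ) + 1)
      * ((m+1).choose k : ℝ)) = 1 - Ufun (m+1) := hU
  have hT' : (∑ k ∈ Finset.Icc 1 (m+1), (-1 : ℝ) ^ (k - 1) / (2 * (k : ℝ) - 1)
      * ((m+1).choose k : ℝ)) = (2 * ((m+1 : ℕ) : ℝ) + 1) * Ufun (m+1) - 1 := hT
  have hins : Finset.Icc 1 (m+1) = insert (m+1) (Finset.Icc 1 m) := by
    ext k; simp; omega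
  have hA : (∑ k ∈ Finset.Icc 1 m, (-1 : ℝ) ^ (k + 1) / (2 * (k : ℝ) + 1)
      * ((m+1).choose k : ℝ))
      = (1 - Ufun (m+1)) - (-1:ℝ) ^ (m+1+1) / (2 * (((m+1):ℕ) : ℝ) + 1) := by
    rw [← hS, hins, Finset.sum_insert (by simp)]
    simp [Nat.choose_self]
  have hmm : m + 1 - 1 = m := rfl
  rw [hmm, hA, hT', hS]
  have hc : (((m+1:ℕ)) : ℝ) = (m : ℝ) + 1 := by push_cast; ring
  rw [hc]
  have hd : (2 * ((m:ℝ) + 1) + 1) ≠ 0 := by positivity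
  have hd2 : (4 * ((m:ℝ) + 1) * (((m:ℝ)+1) + 1)) ≠ 0 := by positivity
  constructor
  · rw [pow_succ, pow_succ]
    field_simp
    ring
  · field_simp
    ring
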